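/- Let n ≥ 5. A semigroup endomorphism α of T_n is regular (i.e. there exists a semigroup endomorphism β with α·β·α = α) if and only if α is bijective (as a map T_n → T_n) or α is idempotent (α·α = α). Moreover, the regular elements are closed under products (if α and β are regular then α·β is regular), and there exists a semigroup endomorphism of T_n that is not regular. -/

import Mathlib

/-- `s : Fin n → Fin n` is an odd permutation if it is the underlying function of some
permutation of sign `-1`. -/
def IsOddPerm {n : ℕ} (s : Fin n → Fin n) : Prop :=
  ∃ σ : Equiv.Perm (Fin n), Equiv.Perm.sign σ = -1 ∧ ⇑σ = s

/-- `s : Fin n → Fin n` is an even permutation if it is the underlying function of some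
permutation of sign `1`. -/
def IsEvenPerm {n : ℕ} (s : Fin n → Fin n) : Prop :=
  ∃ σ : Equiv.Perm (Fin n), Equiv.Perm.sign σ = 1 ∧ ⇑σ = s

/-- A pair `(t, e)` of elements of `T_n` is permissible if `t ∘ t ∘ t = t` and
`t ∘ e = e ∘ t = e ∘ e = e`. -/
def Permissible {n : ℕ} (t e : Fin n → Fin n) : Prop :=
  t ∘ t ∘ t = t ∧ t ∘ e = e ∧ e ∘ t = e ∧ e ∘ e = e

open Classical in
/-- For a (permissible) pair `(t, e)`, the map `φ_{t,e} : T_n → T_n` sending `s` to `t` if `s`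
is an odd permutation, to `t ∘ t` if `s` is an even permutation, and to `e` if `s` is not
bijective. -/
noncomputable def phi {n : ℕ} (t e : Fin n → Fin n) : (Fin n → Fin n) → (Fin n → Fin n) :=
  fun s => if IsOddPerm s then t else if IsEvenPerm s then t ∘ t else e

/-- `φ : T_n → T_n` is a semigroup endomorphism of `T_n` if `φ (s ∘ s') = φ s ∘ φ s'`
for all `s, s'`. -/
def IsEndo {n : ℕ} (φ : (Fin n → Fin n) → (Fin n → Fin n)) : Prop :=
  ∀ s s' : Fin n → Fin n, φ (s ∘ s') = φ s ∘ φ s'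

namespace Reg

variable {n : ℕ}

lemma bij_of_comp {s s' : Fin n → Fin n} (h : Function.Bijective (s ∘ s')) :
    Function.Bijective s ∧ Function.Bijective s' := by
  have hinj : Function.Injective s' := fun a b hab => h.1 (show s (s' a) = s (s' b) by rw [hab])
  have hsurj : Function.Surjective s := fun y => by
    obtain ⟨a, ha⟩ := h.2 y; exact ⟨s' a, ha⟩
  exact ⟨⟨Finite.injective_iff_surjective.mpr hsurj, hsurj⟩,
    ⟨hinj, Finite.injective_iff_surjective.mp hinj⟩⟩

lemma odd_bij {s : Fin n → Fin n} (h : IsOddPerm s) : Function.Bijective s := by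
  obtain ⟨σ, _, rfl⟩ := h; exact σ.bijective

lemma even_bij {s : Fin n → Fin n} (h : IsEvenPerm s) : Function.Bijective s := by
  obtain ⟨σ, _, rfl⟩ := h; exact σ.bijective

lemma not_odd_even {s : Fin n → Fin n} (h1 : IsOddPerm s) (h2 : IsEvenPerm s) : False := by
  obtain ⟨σ, hσ, hs⟩ := h1
  obtain ⟨π, hπ, hp⟩ := h2
  have : σ = π := Equiv.coe_fn_injective (hs.trans hp.symm)
  subst this
  rw [hσ] at hπ
  exact absurd hπ (by decide)

lemma isEvenPerm_id : IsEvenPerm (id : Fin n → Fin n) :=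
  ⟨1, Equiv.Perm.sign_one, rfl⟩

lemma odd_or_even {s : Fin n → Fin n} (h : Function.Bijective s) :
    IsOddPerm s ∨ IsEvenPerm s := by
  rcases Int.units_eq_one_or (Equiv.Perm.sign (Equiv.ofBijective s h)) with h1 | h1
  · exact Or.inr ⟨_, h1, rfl⟩
  · exact Or.inl ⟨_, h1, rfl⟩

lemma not_bij_of_not_perm {s : Fin n → Fin n} (h1 : ¬ IsOddPerm s) (h2 : ¬ IsEvenPerm s) :
    ¬ Function.Bijective s := fun hb => (odd_or_even hb).elim h1 h2

lemma odd_comp_odd {s s' : Fin n → Fin n} (h : IsOddPerm s) (h' : IsOddPerm s') :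
    IsEvenPerm (s ∘ s') := by
  obtain ⟨σ, hσ, rfl⟩ := h; obtain ⟨π, hπ, rfl⟩ := h'
  exact ⟨σ * π, by rw [map_mul, hσ, hπ]; decide, Equiv.Perm.coe_mul σ π⟩

lemma odd_comp_even {s s' : Fin n → Fin n} (h : IsOddPerm s) (h' : IsEvenPerm s') :
    IsOddPerm (s ∘ s') := by
  obtain ⟨σ, hσ, rfl⟩ := h; obtain ⟨π, hπ, rfl⟩ := h'
  exact ⟨σ * π, by rw [map_mul, hσ, hπ, mul_one], Equiv.Perm.coe_mul σ π⟩

lemma even_comp_odd {s s' : Fin n → Fin n} (h : IsEvenPerm s) (h' : IsOddPerm s') :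
    IsOddPerm (s ∘ s') := by
  obtain ⟨σ, hσ, rfl⟩ := h; obtain ⟨π, hπ, rfl⟩ := h'
  exact ⟨σ * π, by rw [map_mul, hσ, hπ, one_mul], Equiv.Perm.coe_mul σ π⟩

lemma even_comp_even {s s' : Fin n → Fin n} (h : IsEvenPerm s) (h' : IsEvenPerm s') :
    IsEvenPerm (s ∘ s') := by
  obtain ⟨σ, hσ, rfl⟩ := h; obtain ⟨π, hπ, rfl⟩ := h'
  exact ⟨σ * π, by rw [map_mul, hσ, hπ, mul_one], Equiv.Perm.coe_mul σ π⟩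

lemma phi_odd {t e s : Fin n → Fin n} (h : IsOddPerm s) : phi t e s = t := by
  unfold phi; rw [if_pos h]

lemma phi_even {t e s : Fin n → Fin n} (h : IsEvenPerm s) : phi t e s = t ∘ t := by
  unfold phi; rw [if_neg (fun h' => not_odd_even h' h), if_pos h]

lemma phi_sing {t e s : Fin n → Fin n} (h : ¬ Function.Bijective s) : phi t e s = e := by
  unfold phi
  rw [if_neg (fun h' => h (odd_bij h')), if_neg (fun h' => h (even_bij h'))]

lemma endo_phi {t e : Fin n → Fin n} (hp : Permissible t e) : IsEndo (phi t e) := by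
  obtain ⟨h3, hte, het, hee⟩ := hp
  have tte : (t ∘ t) ∘ e = e := by rw [Function.comp_assoc, hte, hte]
  have ett : e ∘ (t ∘ t) = e := by rw [← Function.comp_assoc, het, het]
  have h4 : (t ∘ t) ∘ (t ∘ t) = t ∘ t := funext fun x => (congrFun h3 (t x)).symm ▸ rfl
  intro s s'
  by_cases h1 : IsOddPerm s
  · by_cases h2 : IsOddPerm s'
    · rw [phi_odd h1, phi_odd h2, phi_even (odd_comp_odd h1 h2)]
    · by_cases h2' : IsEvenPerm s'
      · rw [phi_odd h1, phi_even h2', phi_odd (odd_comp_even h1 h2')]; exact h3.symm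
      · have hnb : ¬ Function.Bijective s' := not_bij_of_not_perm h2 h2'
        rw [phi_odd h1, phi_sing hnb, phi_sing (fun hb => hnb (bij_of_comp hb).2)]
        exact hte.symm
  · by_cases h1' : IsEvenPerm s
    · by_cases h2 : IsOddPerm s'
      · rw [phi_even h1', phi_odd h2, phi_odd (even_comp_odd h1' h2)]; exact h3.symm
      · by_cases h2' : IsEvenPerm s'
        · rw [phi_even h1', phi_even h2', phi_even (even_comp_even h1' h2')]
          exact h4.symm
        · have hnb : ¬ Function.Bijective s' := not_bij_of_not_perm h2 h2'
          rw [phi_even h1', phi_sing hnb, phi_sing (fun hb => hnb (bij_of_comp hb).2)]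
          exact tte.symm
    · have hnb : ¬ Function.Bijective s := not_bij_of_not_perm h1 h1'
      have hnbc : ¬ Function.Bijective (s ∘ s') := fun hb => hnb (bij_of_comp hb).1
      rw [phi_sing hnb, phi_sing hnbc]
      by_cases h2 : IsOddPerm s'
      · rw [phi_odd h2]; exact het.symm
      · by_cases h2' : IsEvenPerm s'
        · rw [phi_even h2']; exact ett.symm
        · rw [phi_sing (not_bij_of_not_perm h2 h2')]; exact hee.symm



open Function Equiv Equiv.Perm

section Bij
variable {α : (Fin n → Fin n) → (Fin n → Fin n)}
  (hα : ∀ s s' : Fin n → Fin n, α (s ∘ s') = α s ∘ α s') (hb : Function.Bijective α)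

include hα hb

lemma endo_id : α id = id := by
  obtain ⟨s, hs⟩ := hb.2 id
  have h1 : α id ∘ α s = α s := by rw [← hα, Function.id_comp]
  rw [hs] at h1
  simpa using h1

lemma bij_pres {s : Fin n → Fin n} (hs : Function.Bijective s) :
    Function.Bijective (α s) := by
  set σ := Equiv.ofBijective s hs with hσ
  have h1 : s ∘ ⇑σ.symm = id := funext fun x => σ.apply_symm_apply x
  have h2 : ⇑σ.symm ∘ s = id := funext fun x => σ.symm_apply_apply x
  have k1 : α s ∘ α ⇑σ.symm = id := by rw [← hα, h1, endo_id hα hb]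
  have k2 : α ⇑σ.symm ∘ α s = id := by rw [← hα, h2, endo_id hα hb]
  constructor
  · intro x y hxy
    have hx := congrFun k2 x
    have hy := congrFun k2 y
    simp only [Function.comp_apply, id_eq] at hx hy
    rw [← hx, ← hy, hxy]
  · intro y
    exact ⟨α ⇑σ.symm y, congrFun k1 y⟩

lemma bij_pres' {s : Fin n → Fin n} (hs : Function.Bijective (α s)) :
    Function.Bijective s := by
  obtain ⟨u, hu⟩ := hb.2 ⇑(Equiv.ofBijective _ hs).symm
  have h1 : α (s ∘ u) = id := by
    rw [hα, hu]
    exact funext fun x => (Equiv.ofBijective _ hs).apply_symm_apply x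
  have h2 : s ∘ u = id := hb.1 (h1.trans (endo_id hα hb).symm)
  have hsurj : Function.Surjective s := fun y => ⟨u y, congrFun h2 y⟩
  exact ⟨Finite.injective_iff_surjective.mpr hsurj, hsurj⟩

end Bij

open Equiv Equiv.Perm
variable {n : ℕ}

noncomputable def hatHom {α : (Fin n → Fin n) → (Fin n → Fin n)}
    (hα : ∀ s s' : Fin n → Fin n, α (s ∘ s') = α s ∘ α s') (hb : Function.Bijective α) :
    Equiv.Perm (Fin n) →* Equiv.Perm (Fin n) where
  toFun σ := Equiv.ofBijective (α ⇑σ) (bij_pres hα hb σ.bijective)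
  map_one' := by
    refine Equiv.ext fun x => ?_
    show α ⇑(1 : Perm (Fin n)) x = x
    rw [Equiv.Perm.coe_one, endo_id hα hb]
    rfl
  map_mul' σ π := by
    refine Equiv.ext fun x => ?_
    show α ⇑(σ * π) x = α ⇑σ (α ⇑π x)
    rw [Equiv.Perm.coe_mul, hα]
    rfl

lemma coe_hatHom {α : (Fin n → Fin n) → (Fin n → Fin n)}
    (hα : ∀ s s' : Fin n → Fin n, α (s ∘ s') = α s ∘ α s') (hb : Function.Bijective α)
    (σ : Perm (Fin n)) : ⇑(hatHom hα hb σ) = α ⇑σ := rfl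

lemma hatHom_inj {α : (Fin n → Fin n) → (Fin n → Fin n)}
    (hα : ∀ s s' : Fin n → Fin n, α (s ∘ s') = α s ∘ α s') (hb : Function.Bijective α) :
    Function.Injective (hatHom hα hb) := by
  intro σ π h
  have : α ⇑σ = α ⇑π := by
    rw [← coe_hatHom hα hb, ← coe_hatHom hα hb, h]
  exact Equiv.coe_fn_injective (hb.1 this)

lemma sign_hatHom (hn : 2 ≤ n) {α : (Fin n → Fin n) → (Fin n → Fin n)}
    (hα : ∀ s s' : Fin n → Fin n, α (s ∘ s') = α s ∘ α s') (hb : Function.Bijective α)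
    (σ : Perm (Fin n)) : Equiv.Perm.sign (hatHom hα hb σ) = Equiv.Perm.sign σ := by
  set χ := (Equiv.Perm.sign (α := Fin n)).comp (hatHom hα hb) with hχ
  have h3c : ∀ c : Perm (Fin n), c.IsThreeCycle → χ c = 1 := by
    intro c hc
    have hc3 : c ^ 3 = 1 := by
      rw [← hc.orderOf]; exact pow_orderOf_eq_one c
    have : χ c ^ 3 = 1 := by rw [← map_pow, hc3, map_one]
    calc χ c = χ c ^ 3 * (χ c ^ 2)⁻¹ := by group
    _ = 1 := by rw [this, Int.units_sq]; simp
  have heven : ∀ σ : Perm (Fin n), Equiv.Perm.sign σ = 1 → χ σ = 1 := by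
    intro σ hσ
    have hmem : σ ∈ alternatingGroup (Fin n) := Equiv.Perm.mem_alternatingGroup.mpr hσ
    rw [← Equiv.Perm.closure_three_cycles_eq_alternating] at hmem
    have hle : Subgroup.closure {σ : Perm (Fin n) | σ.IsThreeCycle} ≤ χ.ker := by
      rw [Subgroup.closure_le]
      intro c hc
      exact h3c c hc
    exact hle hmem
  rcases Int.units_eq_one_or (Equiv.Perm.sign σ) with h1 | h1
  · rw [h1]; exact heven σ h1
  · rw [h1]
    rcases Int.units_eq_one_or (χ σ) with h2 | h2
    · exfalso
      have hall : ∀ π : Perm (Fin n), χ π = 1 := by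
        intro π
        rcases Int.units_eq_one_or (Equiv.Perm.sign π) with h3 | h3
        · exact heven π h3
        · have : Equiv.Perm.sign (σ⁻¹ * π) = 1 := by
            rw [map_mul, map_inv, h1, h3]; decide
          have h4 := heven _ this
          have : χ π = χ σ * χ (σ⁻¹ * π) := by rw [← map_mul]; group
          rw [this, h2, h4, one_mul]
      -- hat is surjective, but its image has trivial sign
      have hsurj : Function.Surjective (hatHom hα hb) :=
        Finite.injective_iff_surjective.mp (hatHom_inj hα hb)
      have h0 : (⟨0, by omega⟩ : Fin n) ≠ (⟨1, by omega⟩ : Fin n) := by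
        simp [Fin.ext_iff]
      obtain ⟨π, hπ⟩ := hsurj (Equiv.swap ⟨0, by omega⟩ ⟨1, by omega⟩)
      have := hall π
      rw [hχ] at this
      simp only [MonoidHom.comp_apply, hπ] at this
      rw [Equiv.Perm.sign_swap h0] at this
      exact absurd this (by decide)
    · exact h2

lemma odd_pres {α : (Fin n → Fin n) → (Fin n → Fin n)} (hn : 2 ≤ n)
    (hα : ∀ s s' : Fin n → Fin n, α (s ∘ s') = α s ∘ α s') (hb : Function.Bijective α)
    {s : Fin n → Fin n} (h : IsOddPerm s) : IsOddPerm (α s) := by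
  obtain ⟨σ, hσ, rfl⟩ := h
  exact ⟨hatHom hα hb σ, by rw [sign_hatHom hn hα hb, hσ], coe_hatHom hα hb σ⟩

lemma even_pres {α : (Fin n → Fin n) → (Fin n → Fin n)} (hn : 2 ≤ n)
    (hα : ∀ s s' : Fin n → Fin n, α (s ∘ s') = α s ∘ α s') (hb : Function.Bijective α)
    {s : Fin n → Fin n} (h : IsEvenPerm s) : IsEvenPerm (α s) := by
  obtain ⟨σ, hσ, rfl⟩ := h
  exact ⟨hatHom hα hb σ, by rw [sign_hatHom hn hα hb, hσ], coe_hatHom hα hb σ⟩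



lemma exists_perm_pair {u w u' w' : Fin n} (h : u ≠ w) (h' : u' ≠ w') :
    ∃ σ : Perm (Fin n), σ u = u' ∧ σ w = w' := by
  classical
  set π₁ := Equiv.swap u u' with hπ₁
  have h1 : π₁ u = u' := Equiv.swap_apply_left u u'
  by_cases hj : π₁ w = w'
  · exact ⟨π₁, h1, hj⟩
  · have hj₁ : π₁ w ≠ u' := fun h0 => h ((π₁.injective (h0.trans h1.symm)).symm)
    refine ⟨Equiv.swap (π₁ w) w' * π₁, ?_, ?_⟩
    · rw [Equiv.Perm.mul_apply, h1]
      exact Equiv.swap_apply_of_ne_of_ne (Ne.symm hj₁) h'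
    · rw [Equiv.Perm.mul_apply]
      exact Equiv.swap_apply_left _ _

lemma exists_two_ne (hn : 5 ≤ n) (i j : Fin n) :
    ∃ a b : Fin n, a ≠ b ∧ a ≠ i ∧ a ≠ j ∧ b ≠ i ∧ b ≠ j := by
  classical
  have hcard : 1 < (Finset.univ \ {i, j} : Finset (Fin n)).card := by
    have h1 : ({i, j} : Finset (Fin n)).card ≤ 2 :=
      (Finset.card_insert_le _ _).trans (by simp)
    have h2 : (Finset.univ \ {i, j} : Finset (Fin n)).card =
        n - ({i, j} : Finset (Fin n)).card := by
      rw [Finset.card_sdiff_of_subset (Finset.subset_univ _), Finset.card_univ, Fintype.card_fin]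
    omega
  obtain ⟨a, ha, b, hb, hab⟩ := Finset.one_lt_card.mp hcard
  simp only [Finset.mem_sdiff, Finset.mem_insert, Finset.mem_singleton, not_or] at ha hb
  exact ⟨a, b, hab, ha.2.1, ha.2.2, hb.2.1, hb.2.2⟩

lemma exists_ne_two (hn : 5 ≤ n) (i j : Fin n) : ∃ c : Fin n, c ≠ i ∧ c ≠ j := by
  obtain ⟨a, _, hab, hai, haj, _⟩ := exists_two_ne hn i j
  exact ⟨a, hai, haj⟩

lemma exists_ne_four (hn : 5 ≤ n) (i j k l : Fin n) :
    ∃ c : Fin n, c ≠ i ∧ c ≠ j ∧ c ≠ k ∧ c ≠ l := by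
  classical
  have hcard : 0 < (Finset.univ \ {i, j, k, l} : Finset (Fin n)).card := by
    have h1 : ({i, j, k, l} : Finset (Fin n)).card ≤ 4 := by
      refine (Finset.card_insert_le _ _).trans ?_
      have : ({j, k, l} : Finset (Fin n)).card ≤ 3 := by
        refine (Finset.card_insert_le _ _).trans ?_
        have : ({k, l} : Finset (Fin n)).card ≤ 2 :=
          (Finset.card_insert_le _ _).trans (by simp)
        omega
      omega
    have h2 : (Finset.univ \ {i, j, k, l} : Finset (Fin n)).card =
        n - ({i, j, k, l} : Finset (Fin n)).card := by
      rw [Finset.card_sdiff_of_subset (Finset.subset_univ _), Finset.card_univ, Fintype.card_fin]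
    omega
  obtain ⟨c, hc⟩ := Finset.card_pos.mp hcard
  simp only [Finset.mem_sdiff, Finset.mem_insert, Finset.mem_singleton, not_or] at hc
  exact ⟨c, hc.2.1, hc.2.2.1, hc.2.2.2.1, hc.2.2.2.2⟩

lemma exists_even_pair (hn : 5 ≤ n) {i j i' j' : Fin n} (hij : i ≠ j) (hij' : i' ≠ j') :
    ∃ σ : Perm (Fin n), Equiv.Perm.sign σ = 1 ∧ σ i = i' ∧ σ j = j' := by
  obtain ⟨π, hπi, hπj⟩ := exists_perm_pair hij hij'
  rcases Int.units_eq_one_or (Equiv.Perm.sign π) with hs | hs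
  · exact ⟨π, hs, hπi, hπj⟩
  · obtain ⟨a, b, hab, hai, haj, hbi, hbj⟩ := exists_two_ne hn i j
    refine ⟨π * Equiv.swap a b, ?_, ?_, ?_⟩
    · rw [map_mul, hs, Equiv.Perm.sign_swap hab]; decide
    · rw [Equiv.Perm.mul_apply, Equiv.swap_apply_of_ne_of_ne (Ne.symm hai) (Ne.symm hbi), hπi]
    · rw [Equiv.Perm.mul_apply, Equiv.swap_apply_of_ne_of_ne (Ne.symm haj) (Ne.symm hbj), hπj]

/-- The idempotent sending `i` to `j` and fixing everything else. -/
def eps (i j : Fin n) : Fin n → Fin n := fun x => if x = i then j else x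

lemma eps_comp_self {i j : Fin n} (hij : i ≠ j) : eps i j ∘ eps i j = eps i j := by
  funext x
  by_cases hx : x = i <;> simp [eps, hx, Ne.symm hij]

lemma eps_not_bij {i j : Fin n} (hij : i ≠ j) : ¬ Function.Bijective (eps i j) := by
  intro hb
  have h1 : eps i j i = eps i j j := by
    simp [eps, Ne.symm hij]
  exact hij (hb.1 h1)

lemma eps_conj {i j : Fin n} (σ : Perm (Fin n)) :
    ⇑σ ∘ eps i j ∘ ⇑σ⁻¹ = eps (σ i) (σ j) := by
  funext x
  simp only [Function.comp_apply, eps]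
  by_cases hx : x = σ i
  · have : σ⁻¹ x = i := by rw [hx]; exact σ.symm_apply_apply i
    rw [if_pos this, if_pos hx]
  · have : σ⁻¹ x ≠ i := fun h0 => hx (by rw [← h0]; exact (σ.apply_symm_apply x).symm)
    rw [if_neg this, if_neg hx]
    exact σ.apply_symm_apply x

lemma comp_eps_self {s : Fin n → Fin n} {i j : Fin n} (h : s i = s j) :
    s ∘ eps i j = s := by
  funext x
  simp only [Function.comp_apply, eps]
  by_cases hx : x = i
  · rw [if_pos hx, hx, h]
  · rw [if_neg hx]


section Classification

variable {α : (Fin n → Fin n) → (Fin n → Fin n)}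

theorem classification (hn : 5 ≤ n) (hα : IsEndo α) (hnb : ¬ Function.Bijective α) :
    ∃ t e : Fin n → Fin n, Permissible t e ∧ α = phi t e := by
  classical
  -- α is not injective
  have hni : ¬ Function.Injective α := fun h => hnb (Finite.injective_iff_bijective.mp h)
  rw [Function.not_injective_iff] at hni
  obtain ⟨a, b, hab, hne⟩ := hni
  obtain ⟨x₀, hx₀⟩ := Function.ne_iff.mp hne
  -- all constants are identified
  have hconst : ∀ u w : Fin n, α (fun _ => u) = α (fun _ => w) := by
    have base : α (fun _ => a x₀) = α (fun _ => b x₀) := by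
      have h1 : (fun _ => a x₀ : Fin n → Fin n) = a ∘ (fun _ => x₀) := rfl
      have h2 : (fun _ => b x₀ : Fin n → Fin n) = b ∘ (fun _ => x₀) := rfl
      rw [h1, h2, hα, hα, hab]
    intro u w
    by_cases huw : u = w
    · rw [huw]
    · obtain ⟨σ, hσu, hσw⟩ := exists_perm_pair hx₀ (show u ≠ w from huw)
      have e1 : (fun _ => u : Fin n → Fin n) = ⇑σ ∘ (fun _ => a x₀) := by
        funext y; simp [hσu]
      have e2 : (fun _ => w : Fin n → Fin n) = ⇑σ ∘ (fun _ => b x₀) := by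
        funext y; simp [hσw]
      rw [e1, e2, hα, hα, base]
  -- absorption by f = α id
  have hidl : ∀ s, α id ∘ α s = α s := fun s => by rw [← hα, Function.id_comp]
  have hidr : ∀ s, α s ∘ α id = α s := fun s => by rw [← hα, Function.comp_id]
  have hmul : ∀ σ π : Perm (Fin n), α ⇑(σ * π) = α ⇑σ ∘ α ⇑π := fun σ π => by
    rw [Equiv.Perm.coe_mul, hα]
  have hff : α id ∘ α id = α id := hidl id
  have hinv : ∀ σ : Perm (Fin n), α ⇑σ⁻¹ ∘ α ⇑σ = α id := fun σ => by
    rw [← hmul, inv_mul_cancel, Equiv.Perm.coe_one]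
  have hinv' : ∀ σ : Perm (Fin n), α ⇑σ ∘ α ⇑σ⁻¹ = α id := fun σ => by
    rw [← hmul, mul_inv_cancel, Equiv.Perm.coe_one]
  -- α cannot be injective on permutations
  have hpninj : ¬ (∀ σ π : Perm (Fin n), α ⇑σ = α ⇑π → σ = π) := by
    intro hpinj
    -- the fixed set of f
    set f := α id with hf
    have hffix : ∀ x, f (f x) = f x := fun x => congrFun hff x
    have hcardA : Fintype.card {x : Fin n // f x = x} = n := by
      set k := Fintype.card {x : Fin n // f x = x} with hk
      have hkn : k ≤ n := by
        have := Fintype.card_subtype_le (fun x : Fin n => f x = x)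
        rwa [Fintype.card_fin] at this
      -- embedding of Perm (Fin n) into embeddings of A into A
      have hemb : Function.Injective
          (fun σ : Perm (Fin n) =>
            (⟨fun x : {x : Fin n // f x = x} => ⟨α ⇑σ x, by
                have := congrFun (hidl ⇑σ) (x : Fin n); exact this⟩, by
              intro x y hxy
              have h1 : α ⇑σ⁻¹ (α ⇑σ (x : Fin n)) = f (x : Fin n) :=
                congrFun (hinv σ) (x : Fin n)
              have h2 : α ⇑σ⁻¹ (α ⇑σ (y : Fin n)) = f (y : Fin n) :=
                congrFun (hinv σ) (y : Fin n)
              have h3 : (α ⇑σ (x : Fin n)) = (α ⇑σ (y : Fin n)) :=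
                congrArg Subtype.val hxy
              have h4 : f (x : Fin n) = f (y : Fin n) := by rw [← h1, ← h2, h3]
              rw [x.2, y.2] at h4
              exact Subtype.ext h4⟩ :
              {x : Fin n // f x = x} ↪ {x : Fin n // f x = x})) := by
        intro σ π h
        apply hpinj
        funext y
        have hyA : f (f y) = f y := hffix y
        have h1 : α ⇑σ y = α ⇑σ (f y) := (congrFun (hidr ⇑σ) y).symm
        have h2 : α ⇑π y = α ⇑π (f y) := (congrFun (hidr ⇑π) y).symm
        have h3 := congrArg
          (fun g : {x : Fin n // f x = x} ↪ {x : Fin n // f x = x} => (g ⟨f y, hyA⟩ : Fin n)) h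
        simp only [Function.Embedding.coeFn_mk] at h3
        rw [h1, h2]
        exact h3
      have hcardle := Fintype.card_le_of_injective _ hemb
      rw [Fintype.card_perm, Fintype.card_fin, Fintype.card_embedding_eq,
        Nat.descFactorial_self] at hcardle
      rw [← hk] at hcardle
      by_contra hne'
      have hlt : k < n := lt_of_le_of_ne hkn hne'
      have hk1 : 1 ≤ k := Fintype.card_pos_iff.mpr ⟨⟨f x₀, hffix x₀⟩⟩
      have hfact : Nat.factorial k < Nat.factorial n := (Nat.factorial_lt (by omega)).mpr hlt
      omega
    have hfid : f = id := by
      funext x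
      by_contra hx
      have := Fintype.card_subtype_lt (p := fun x : Fin n => f x = x) hx
      rw [hcardA, Fintype.card_fin] at this
      omega
    -- all α ⇑σ are bijective and fix v
    have hbijσ : ∀ σ : Perm (Fin n), Function.Bijective (α ⇑σ) := by
      intro σ
      constructor
      · intro x y hxy
        have h1 := congrFun (hinv σ) x
        have h2 := congrFun (hinv σ) y
        rw [hfid] at h1 h2
        simp only [Function.comp_apply, id_eq] at h1 h2
        rw [← h1, ← h2, hxy]
      · intro y
        refine ⟨α ⇑σ⁻¹ y, ?_⟩
        have := congrFun (hinv' σ) y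
        rw [hfid] at this
        simpa using this
    have h0n : 0 < n := by omega
    set z : Fin n := ⟨0, h0n⟩ with hz
    set v := α (fun _ : Fin n => z) z with hv
    have hfixv : ∀ σ : Perm (Fin n), α ⇑σ v = v := by
      intro σ
      have h2 : α (fun _ : Fin n => σ z) = α (fun _ : Fin n => z) := hconst _ _
      calc α ⇑σ v = (α ⇑σ ∘ α (fun _ : Fin n => z)) z := rfl
        _ = α (⇑σ ∘ (fun _ : Fin n => z)) z := by rw [hα]
        _ = α (fun _ : Fin n => σ z) z := rfl
        _ = v := by rw [h2]
    -- embed Perm (Fin n) into Perm of the complement of v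
    have hΨinj : Function.Injective (fun σ : Perm (Fin n) =>
        Equiv.Perm.subtypePerm (Equiv.ofBijective (α ⇑σ) (hbijσ σ))
          (p := fun y => y ≠ v) (by
            intro x
            constructor
            · intro hx h0
              rw [h0] at hx
              exact hx (hfixv σ)
            · intro hx h0
              exact hx ((hbijσ σ).1 (h0.trans (hfixv σ).symm)))) := by
      intro σ π h
      apply hpinj
      funext y
      by_cases hy : y = v
      · rw [hy, hfixv σ, hfixv π]
      · have h3 := congrArg
          (fun g : Perm {y : Fin n // y ≠ v} => (g ⟨y, hy⟩ : Fin n)) h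
        simpa using h3
    have hcardle := Fintype.card_le_of_injective _ hΨinj
    rw [Fintype.card_perm, Fintype.card_fin, Fintype.card_perm] at hcardle
    have hcs : Fintype.card {y : Fin n // y ≠ v} = n - 1 := by
      have h1 : Fintype.card {y : Fin n // ¬ (y = v)} =
          Fintype.card (Fin n) - Fintype.card {y : Fin n // y = v} :=
        Fintype.card_subtype_compl _
      rw [Fintype.card_fin, Fintype.card_subtype_eq] at h1
      exact h1
    rw [hcs] at hcardle
    have h5 : Nat.factorial (n - 1) < Nat.factorial n :=
      (Nat.factorial_lt (by omega)).mpr (by omega)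
    omega
  push_neg at hpninj
  obtain ⟨σ₀, π₀, heq0, hne0⟩ := hpninj
  -- the kernel subgroup N
  set N : Subgroup (Perm (Fin n)) :=
    { carrier := {σ : Perm (Fin n) | α ⇑σ = α id}
      one_mem' := by simp [Equiv.Perm.coe_one]
      mul_mem' := by
        intro σ π hσ hπ
        simp only [Set.mem_setOf_eq] at *
        rw [hmul, hσ, hπ, hff]
      inv_mem' := by
        intro σ hσ
        simp only [Set.mem_setOf_eq] at *
        have h1 : α ⇑σ⁻¹ ∘ α ⇑σ = α id := hinv σ
        rw [hσ] at h1
        rw [← h1, hidr] } with hN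
  have hmemN : ∀ σ : Perm (Fin n), σ ∈ N ↔ α ⇑σ = α id := fun σ => Iff.rfl
  have hNnormal : N.Normal := by
    constructor
    intro σ hσ π
    rw [hmemN] at *
    rw [hmul, hmul, hσ, hidr, hinv']
  have hςmem : σ₀ * π₀⁻¹ ∈ N := by
    rw [hmemN, hmul, heq0, hinv']
  have hς1 : σ₀ * π₀⁻¹ ≠ 1 := by
    intro h0
    exact hne0 (by rw [← mul_inv_cancel π₀] at h0; exact mul_right_cancel h0)
  -- extract a three-cycle in N
  have h3cyc : ∃ γ : Perm (Fin n), γ ∈ N ∧ Equiv.Perm.IsThreeCycle γ := by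
    set ς := σ₀ * π₀⁻¹ with hςdef
    obtain ⟨a', ha'⟩ : ∃ x, ς x ≠ x := by
      by_contra h0
      push_neg at h0
      exact hς1 (Equiv.ext h0)
    obtain ⟨c, hca, hcb⟩ := exists_ne_two hn a' (ς a')
    have hconjmem : ∀ (τ : Perm (Fin n)) (ρ : Perm (Fin n)), ρ ∈ N → τ * ρ * τ⁻¹ ∈ N :=
      fun τ ρ hρ => hNnormal.conj_mem ρ hρ τ
    -- θ = swap (ς a') (ς c) * swap a' c ∈ N
    have hθmem : Equiv.swap (ς a') (ς c) * Equiv.swap a' c ∈ N := by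
      have h1 : Equiv.swap (ς a') (ς c) = ς * Equiv.swap a' c * ς⁻¹ :=
        Equiv.swap_apply_apply ς a' c
      rw [h1]
      have h2 : ς * Equiv.swap a' c * ς⁻¹ * Equiv.swap a' c
          = ς * (Equiv.swap a' c * ς⁻¹ * (Equiv.swap a' c)⁻¹) := by
        rw [Equiv.swap_inv]; group
      rw [h2]
      exact N.mul_mem hςmem (hconjmem _ _ (N.inv_mem hςmem))
    have hbne : ς a' ≠ a' := ha'
    have hdb : ς c ≠ ς a' := fun h0 => hca (ς.injective h0)
    by_cases hdc : ς c = c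
    · -- θ = swap (ς a') c * swap a' c : three-cycle sharing c
      refine ⟨_, hθmem, ?_⟩
      rw [hdc]
      rw [Equiv.swap_comm (ς a') c, Equiv.swap_comm a' c]
      exact Equiv.Perm.isThreeCycle_swap_mul_swap_same hcb hca hbne
    · by_cases hda : ς c = a'
      · -- θ = swap (ς a') a' * swap a' c : three-cycle sharing a'
        refine ⟨_, hθmem, ?_⟩
        rw [hda]
        rw [Equiv.swap_comm (ς a') a']
        exact Equiv.Perm.isThreeCycle_swap_mul_swap_same
          (Ne.symm hbne) (Ne.symm hca) (Ne.symm hcb)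
      · -- double transposition case
        set θ := Equiv.swap (ς a') (ς c) * Equiv.swap a' c with hθdef
        obtain ⟨u, hu1, hu2, hu3, hu4⟩ := exists_ne_four hn a' (ς a') c (ς c)
        have hθa : θ a' = c := by
          rw [hθdef, Equiv.Perm.mul_apply, Equiv.swap_apply_left]
          exact Equiv.swap_apply_of_ne_of_ne hcb (fun h0 => hdc h0.symm)
        have hθu : θ u = u := by
          rw [hθdef, Equiv.Perm.mul_apply,
            Equiv.swap_apply_of_ne_of_ne hu1 hu3,
            Equiv.swap_apply_of_ne_of_ne hu2 hu4]
        have hγmem : Equiv.swap (θ a') (θ u) * Equiv.swap a' u ∈ N := by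
          have h1 : Equiv.swap (θ a') (θ u) = θ * Equiv.swap a' u * θ⁻¹ :=
            Equiv.swap_apply_apply θ a' u
          rw [h1]
          have h2 : θ * Equiv.swap a' u * θ⁻¹ * Equiv.swap a' u
              = θ * (Equiv.swap a' u * θ⁻¹ * (Equiv.swap a' u)⁻¹) := by
            rw [Equiv.swap_inv]; group
          rw [h2]
          exact N.mul_mem hθmem (hconjmem _ _ (N.inv_mem hθmem))
        refine ⟨_, hγmem, ?_⟩
        rw [hθa, hθu]
        rw [Equiv.swap_comm c u, Equiv.swap_comm a' u]
        exact Equiv.Perm.isThreeCycle_swap_mul_swap_same hu3 hu1 hca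
  -- the alternating group is contained in N
  have hAN : ∀ σ : Perm (Fin n), Equiv.Perm.sign σ = 1 → α ⇑σ = α id := by
    obtain ⟨γ, hγN, hγ3⟩ := h3cyc
    intro σ hσsign
    have hσA : σ ∈ alternatingGroup (Fin n) := Equiv.Perm.mem_alternatingGroup.mpr hσsign
    have hcard5 : 5 ≤ Nat.card (Fin n) := by rw [Nat.card_fin]; exact hn
    have hNC := hγ3.alternating_normalClosure hcard5
    haveI hKnormal : (N.subgroupOf (alternatingGroup (Fin n))).Normal :=
      hNnormal.subgroupOf _
    have hsub : Subgroup.normalClosure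
        ({⟨γ, hγ3.mem_alternatingGroup⟩} : Set (alternatingGroup (Fin n)))
        ≤ N.subgroupOf (alternatingGroup (Fin n)) := by
      apply Subgroup.normalClosure_le_normal
      intro x hx
      rw [Set.mem_singleton_iff] at hx
      subst hx
      rw [SetLike.mem_coe, Subgroup.mem_subgroupOf]
      exact hγN
    rw [hNC] at hsub
    have hmem2 : (⟨σ, hσA⟩ : alternatingGroup (Fin n)) ∈
        N.subgroupOf (alternatingGroup (Fin n)) := hsub (Subgroup.mem_top _)
    rw [Subgroup.mem_subgroupOf] at hmem2
    exact hmem2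
  -- the two base points
  have h0n : 0 < n := by omega
  have h1n : 1 < n := by omega
  set z0 : Fin n := ⟨0, h0n⟩ with hz0
  set z1 : Fin n := ⟨1, h1n⟩ with hz1
  have hz01 : z0 ≠ z1 := by simp [hz0, hz1, Fin.ext_iff]
  set τ₀ := Equiv.swap z0 z1 with hτ₀
  have hτ₀sign : Equiv.Perm.sign τ₀ = -1 := Equiv.Perm.sign_swap hz01
  set t := α ⇑τ₀ with ht
  -- α is constant on odd permutations
  have hodd : ∀ σ : Perm (Fin n), Equiv.Perm.sign σ = -1 → α ⇑σ = t := by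
    intro σ hσ
    have h1 : σ = (σ * τ₀) * τ₀ := by
      rw [mul_assoc, Equiv.swap_mul_self, mul_one]
    have h2 : Equiv.Perm.sign (σ * τ₀) = 1 := by
      rw [map_mul, hσ, hτ₀sign]; decide
    calc α ⇑σ = α ⇑((σ * τ₀) * τ₀) := by rw [← h1]
      _ = α ⇑(σ * τ₀) ∘ α ⇑τ₀ := hmul _ _
      _ = α id ∘ α ⇑τ₀ := by rw [hAN _ h2]
      _ = t := hidl _
  have htt : t ∘ t = α id := by
    rw [ht, ← hmul, Equiv.swap_mul_self, Equiv.Perm.coe_one]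
  -- the common value of all rank n-1 idempotents
  set h := α (eps z0 z1) with hh
  have hepsconst : ∀ i j : Fin n, i ≠ j → α (eps i j) = h := by
    intro i j hij
    obtain ⟨σ, hσs, hσi, hσj⟩ := exists_even_pair hn hz01 hij
    have h1 : eps i j = ⇑σ ∘ eps z0 z1 ∘ ⇑σ⁻¹ := by rw [eps_conj, hσi, hσj]
    have hsigninv : Equiv.Perm.sign σ⁻¹ = 1 := by rw [Equiv.Perm.sign_inv, hσs]
    rw [h1, hα, hα, hAN _ hσs, hAN _ hsigninv, hidr, hidl]
  have hidh : h ∘ h = h := by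
    rw [hh, ← hα, eps_comp_self hz01]
  -- folding the chain of idempotents gives a constant
  have chain_eval : ∀ (v : Fin n) (l : List (Fin n)), (∀ i ∈ l, i ≠ v) →
      ∀ x, (l.foldr (fun i acc => eps i v ∘ acc) id) x = if x ∈ l then v else x := by
    intro v l
    induction l with
    | nil => intro _ x; simp
    | cons i rest ih =>
      intro hvl x
      have hi : i ≠ v := hvl i (by simp)
      have hrest := ih (fun j hj => hvl j (by simp [hj])) x
      simp only [List.foldr_cons, Function.comp_apply, hrest]
      by_cases hx : x ∈ rest
      · rw [if_pos hx, if_pos (by simp [hx])]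
        simp [eps, Ne.symm hi]
      · rw [if_neg hx]
        by_cases hxi : x = i
        · simp [eps, hxi]
        · rw [if_neg (by simp [hxi, hx])]
          simp [eps, hxi]
  have chain_val : ∀ (v : Fin n) (l : List (Fin n)), l ≠ [] → (∀ i ∈ l, i ≠ v) →
      α (l.foldr (fun i acc => eps i v ∘ acc) id) = h := by
    intro v l
    induction l with
    | nil => intro h0 _; exact absurd rfl h0
    | cons i rest ih =>
      intro _ hvl
      have hi : i ≠ v := hvl i (by simp)
      rcases eq_or_ne rest [] with hrest | hrest
      · subst hrest
        simp only [List.foldr_cons, List.foldr_nil]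
        rw [Function.comp_id]
        exact hepsconst i v hi
      · have hrec := ih hrest (fun j hj => hvl j (by simp [hj]))
        simp only [List.foldr_cons]
        rw [hα, hrec, hepsconst i v hi, hidh]
  -- a canonical constant map
  set c0 : Fin n → Fin n := (fun _ => z0) with hc0
  set e := α c0 with he
  have hEh : e = h := by
    set l := (Finset.univ.erase z0).toList with hl
    have hmem : ∀ i : Fin n, i ∈ l ↔ i ≠ z0 := by
      intro i; rw [hl, Finset.mem_toList, Finset.mem_erase]; simp
    have hlv : ∀ i ∈ l, i ≠ z0 := fun i hi => (hmem i).mp hi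
    have hlne : l ≠ [] := by
      intro h0
      have hz1l : z1 ∈ l := (hmem z1).mpr (Ne.symm hz01)
      rw [h0] at hz1l
      simp at hz1l
    have hfold : (l.foldr (fun i acc => eps i z0 ∘ acc) id) = c0 := by
      funext x
      rw [chain_eval z0 l hlv x]
      by_cases hx : x ∈ l
      · rw [if_pos hx]
      · rw [if_neg hx]
        have hxz : x = z0 := by
          by_contra h0
          exact hx ((hmem x).mpr h0)
        rw [hxz]
    rw [he, ← hfold, chain_val z0 l hlne hlv]
  -- all singular elements are sent to e
  have hsing : ∀ s : Fin n → Fin n, ¬ Function.Bijective s → α s = e := by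
    intro s hs
    have hni : ¬ Function.Injective s := fun hi => hs ⟨hi, Finite.injective_iff_surjective.mp hi⟩
    rw [Function.not_injective_iff] at hni
    obtain ⟨i, j, hsij, hij⟩ := hni
    have h1 : s ∘ eps i j = s := comp_eps_self hsij
    calc α s = α (s ∘ eps i j) := by rw [h1]
      _ = α s ∘ α (eps i j) := hα _ _
      _ = α s ∘ α c0 := by rw [hepsconst i j hij, ← hEh, he]
      _ = α (s ∘ c0) := (hα _ _).symm
      _ = α (fun _ => s z0) := rfl
      _ = e := by rw [he, hc0]; exact hconst _ _
  refine ⟨t, e, ⟨?_, ?_, ?_, ?_⟩, ?_⟩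
  · show t ∘ (t ∘ t) = t
    rw [htt, ht, hidr]
  · rw [ht, he, ← hα]
    have h1 : ⇑τ₀ ∘ c0 = (fun _ : Fin n => τ₀ z0) := rfl
    rw [h1, hc0]
    exact hconst _ _
  · rw [ht, he, ← hα]
    rw [show c0 ∘ ⇑τ₀ = c0 from rfl]
  · rw [he, ← hα]
    rw [show c0 ∘ c0 = c0 from rfl]
  · funext s
    by_cases h1 : IsOddPerm s
    · rw [phi_odd h1]
      obtain ⟨σ, hσ, rfl⟩ := h1
      exact hodd σ hσ
    · by_cases h2 : IsEvenPerm s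
      · rw [phi_even h2]
        obtain ⟨σ, hσ, rfl⟩ := h2
        rw [hAN σ hσ, ← htt]
      · rw [phi_sing (not_bij_of_not_perm h1 h2)]
        exact hsing s (not_bij_of_not_perm h1 h2)

end Classification


lemma idem_bij_eq_id {p : Fin n → Fin n} (hpp : p ∘ p = p) (hb : Function.Bijective p) :
    p = id := by
  funext x
  exact hb.1 (congrFun hpp x)

lemma not_odd_id : ¬ IsOddPerm (id : Fin n → Fin n) := by
  rintro ⟨σ, hσ, hs⟩
  have : σ = 1 := Equiv.coe_fn_injective (hs.trans (Equiv.Perm.coe_one).symm)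
  subst this
  rw [Equiv.Perm.sign_one] at hσ
  exact absurd hσ (by decide)

theorem regular_of {α : (Fin n → Fin n) → (Fin n → Fin n)} (hα : IsEndo α)
    (h : Function.Bijective α ∨ (fun x => α (α x)) = α) :
    ∃ β, IsEndo β ∧ (fun x => α (β (α x))) = α := by
  haveI : Nonempty (Fin n → Fin n) := ⟨fun x => x⟩
  rcases h with hb | hi
  · refine ⟨Function.invFun α, ?_, ?_⟩
    · intro s s'
      apply hb.1
      rw [Function.rightInverse_invFun hb.2, hα,
        Function.rightInverse_invFun hb.2, Function.rightInverse_invFun hb.2]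
    · funext x
      rw [Function.leftInverse_invFun hb.1]
  · refine ⟨α, hα, ?_⟩
    funext x
    have h1 := congrFun hi (α x)
    have h2 := congrFun hi x
    rw [h1, h2]

theorem idem_of_regular (hn : 5 ≤ n) {α : (Fin n → Fin n) → (Fin n → Fin n)}
    (hα : IsEndo α) (hnb : ¬ Function.Bijective α)
    (hreg : ∃ β, IsEndo β ∧ (fun x => α (β (α x))) = α) :
    (fun x => α (α x)) = α := by
  obtain ⟨β, hβ, hregeq⟩ := hreg
  have hR : ∀ s, α (β (α s)) = α s := fun s => congrFun hregeq s
  obtain ⟨t, e, hperm, hphi⟩ := classification hn hα hnb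
  obtain ⟨h3, hte, het, hee⟩ := hperm
  have hn2 : 2 ≤ n := by omega
  have h0n : 0 < n := by omega
  have h1n : 1 < n := by omega
  set z0 : Fin n := ⟨0, h0n⟩ with hz0
  set z1 : Fin n := ⟨1, h1n⟩ with hz1
  have hz01 : z0 ≠ z1 := by simp [hz0, hz1, Fin.ext_iff]
  -- representatives
  have hoddrep : IsOddPerm ⇑(Equiv.swap z0 z1) :=
    ⟨Equiv.swap z0 z1, Equiv.Perm.sign_swap hz01, rfl⟩
  have hsingrep : ¬ Function.Bijective (fun _ : Fin n => z0) := by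
    intro hb
    exact hz01 (hb.1 (rfl : (fun _ : Fin n => z0) z0 = (fun _ : Fin n => z0) z1))
  -- the three regularity conditions
  have cond_t : phi t e (β t) = t := by
    have h0 := hR ⇑(Equiv.swap z0 z1)
    rw [hphi, phi_odd hoddrep] at h0
    exact h0
  have cond_e : phi t e (β e) = e := by
    have h0 := hR (fun _ : Fin n => z0)
    rw [hphi, phi_sing hsingrep] at h0
    exact h0
  -- it suffices to prove that phi fixes t, t∘t and e
  suffices hG : phi t e t = t ∧ phi t e (t ∘ t) = t ∘ t ∧ phi t e e = e by
    obtain ⟨G1, G2, G3⟩ := hG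
    funext x
    show α (α x) = α x
    rw [hphi]
    by_cases h1 : IsOddPerm x
    · rw [phi_odd h1]; exact G1
    · by_cases h2 : IsEvenPerm x
      · rw [phi_even h2]; exact G2
      · rw [phi_sing (not_bij_of_not_perm h1 h2)]; exact G3
  by_cases hbt : Function.Bijective t
  · rcases odd_or_even hbt with htodd | hteven
    · -- t odd
      refine ⟨phi_odd htodd, phi_even (odd_comp_odd htodd htodd), ?_⟩
      have hebij : ¬ Function.Bijective e := by
        intro hbe
        have heid : e = id := idem_bij_eq_id hee hbe
        have htid : t = id := by
          have h' := hte
          rw [heid, Function.comp_id] at h'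
          exact h'
        exact not_odd_id (htid ▸ htodd)
      exact phi_sing hebij
    · -- t even : t must be id
      have htid : t = id := by
        by_cases hbβ : Function.Bijective β
        · have h2 : IsEvenPerm (β t) := even_pres hn2 hβ hbβ hteven
          have h4 : t ∘ t = t := by
            have h' := cond_t
            rw [phi_even h2] at h'
            exact h'
          exact idem_bij_eq_id h4 hbt
        · obtain ⟨t', e', hperm', hphi'⟩ := classification hn hβ hbβ
          have hβt : β t = t' ∘ t' := by
            rw [hphi', phi_even hteven]
          by_cases hbt' : Function.Bijective t'
          · have h6 : IsEvenPerm (t' ∘ t') := by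
              rcases odd_or_even hbt' with h5 | h5
              · exact odd_comp_odd h5 h5
              · exact even_comp_even h5 h5
            have h7 : t ∘ t = t := by
              have h' := cond_t
              rw [hβt, phi_even h6] at h'
              exact h'
            exact idem_bij_eq_id h7 hbt
          · have h6 : ¬ Function.Bijective (t' ∘ t') := fun hb => hbt' (bij_of_comp hb).1
            have h7 : e = t := by
              have h' := cond_t
              rw [hβt, phi_sing h6] at h'
              exact h'
            have h8 : t ∘ t = t := by rw [← h7]; exact hee
            exact idem_bij_eq_id h8 hbt
      refine ⟨?_, ?_, ?_⟩
      · rw [htid, phi_even isEvenPerm_id]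
        rfl
      · rw [phi_even (even_comp_even hteven hteven)]
      · by_cases hbe : Function.Bijective e
        · have heid : e = id := idem_bij_eq_id hee hbe
          rw [heid, phi_even isEvenPerm_id, htid]
          rfl
        · exact phi_sing hbe
  · -- t singular : t must equal e
    have het : e = t := by
      by_cases hbβ : Function.Bijective β
      · have h2 : ¬ Function.Bijective (β t) := fun hb => hbt (bij_pres' hβ hbβ hb)
        have h' := cond_t
        rw [phi_sing h2] at h'
        exact h'
      · obtain ⟨t', e', hperm', hphi'⟩ := classification hn hβ hbβ
        have hβt : β t = e' := by rw [hphi', phi_sing hbt]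
        by_cases hbe' : Function.Bijective e'
        · have he'id : e' = id := idem_bij_eq_id hperm'.2.2.2 hbe'
          by_cases hbe : Function.Bijective e
          · exfalso
            have heid : e = id := idem_bij_eq_id hee hbe
            have htid : t = id := by
              have h' := hte
              rw [heid, Function.comp_id] at h'
              exact h'
            exact hbt (htid ▸ Function.bijective_id)
          · have hβe : β e = id := by rw [hphi', phi_sing hbe, he'id]
            have h9 := cond_e
            rw [hβe, phi_even isEvenPerm_id] at h9
            have h10 := cond_t
            rw [hβt, he'id, phi_even isEvenPerm_id] at h10
            rw [← h9, h10]
        · have h11 := cond_t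
          rw [hβt, phi_sing hbe'] at h11
          exact h11
    have hbe : ¬ Function.Bijective e := by rw [het]; exact hbt
    have ht2 : t ∘ t = t := by rw [← het]; exact hee
    have G1 : phi t e t = t := by rw [phi_sing hbt]; exact het
    exact ⟨G1, by rw [ht2]; exact G1, phi_sing hbe⟩


/-- Classification of idempotent non-bijective endomorphisms into eval profiles. -/
theorem idem_profile (hn : 5 ≤ n) {α : (Fin n → Fin n) → (Fin n → Fin n)}
    (hα : IsEndo α) (hnb : ¬ Function.Bijective α)
    (hidem : (fun x => α (α x)) = α) :
    (∃ e, ¬Function.Bijective e ∧ (∀ y, Function.Bijective y → α y = id)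
        ∧ (∀ y, ¬Function.Bijective y → α y = e)) ∨
    (∃ e, ¬Function.Bijective e ∧ (∀ y, α y = e)) ∨
    (∃ t e, ¬Function.Bijective e ∧ IsOddPerm t ∧
        (∀ y, IsOddPerm y → α y = t) ∧ (∀ y, IsEvenPerm y → α y = id)
        ∧ (∀ y, ¬Function.Bijective y → α y = e)) ∨
    (∀ y, α y = id) := by
  obtain ⟨t, e, hperm, hphi⟩ := classification hn hα hnb
  obtain ⟨h3, hte, het, hee⟩ := hperm
  have h0n : 0 < n := by omega
  have h1n : 1 < n := by omega
  set z0 : Fin n := ⟨0, h0n⟩ with hz0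
  set z1 : Fin n := ⟨1, h1n⟩ with hz1
  have hz01 : z0 ≠ z1 := by simp [hz0, hz1, Fin.ext_iff]
  have hoddrep : IsOddPerm ⇑(Equiv.swap z0 z1) :=
    ⟨Equiv.swap z0 z1, Equiv.Perm.sign_swap hz01, rfl⟩
  have hαodd : α ⇑(Equiv.swap z0 z1) = t := by rw [hphi, phi_odd hoddrep]
  have G1 : phi t e t = t := by
    have h' := congrFun hidem ⇑(Equiv.swap z0 z1)
    rw [hαodd, hphi] at h'
    exact h'
  by_cases hbt : Function.Bijective t
  · rcases odd_or_even hbt with htodd | hteven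
    · -- profile: odd
      have htt : t ∘ t = id := funext fun x => hbt.1 (congrFun h3 x)
      have hebij : ¬ Function.Bijective e := by
        intro hbe
        have heid : e = id := idem_bij_eq_id hee hbe
        have htid : t = id := by
          have h' := hte
          rw [heid, Function.comp_id] at h'
          exact h'
        exact not_odd_id (htid ▸ htodd)
      refine Or.inr (Or.inr (Or.inl ⟨t, e, hebij, htodd, ?_, ?_, ?_⟩))
      · intro y hy; rw [hphi, phi_odd hy]
      · intro y hy; rw [hphi, phi_even hy]; exact htt
      · intro y hy; rw [hphi, phi_sing hy]
    · -- t even, hence t = id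
      have htid : t = id := by
        have h' := G1
        rw [phi_even hteven] at h'
        exact idem_bij_eq_id h' hbt
      by_cases hbe : Function.Bijective e
      · have heid : e = id := idem_bij_eq_id hee hbe
        refine Or.inr (Or.inr (Or.inr ?_))
        intro y
        rw [hphi]
        by_cases h1 : IsOddPerm y
        · rw [phi_odd h1]; exact htid
        · by_cases h2 : IsEvenPerm y
          · rw [phi_even h2, htid]; rfl
          · rw [phi_sing (not_bij_of_not_perm h1 h2)]; exact heid
      · refine Or.inl ⟨e, hbe, ?_, ?_⟩
        · intro y hy
          rw [hphi]
          rcases odd_or_even hy with h1 | h1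
          · rw [phi_odd h1]; exact htid
          · rw [phi_even h1, htid]; rfl
        · intro y hy; rw [hphi, phi_sing hy]
  · -- t singular, hence t = e and α is constant e
    have het' : e = t := by
      have h' := G1
      rw [phi_sing hbt] at h'
      exact h'
    have hbe : ¬ Function.Bijective e := by rw [het']; exact hbt
    refine Or.inr (Or.inl ⟨e, hbe, ?_⟩)
    intro y
    rw [hphi]
    by_cases h1 : IsOddPerm y
    · rw [phi_odd h1]; exact het'.symm
    · by_cases h2 : IsEvenPerm y
      · rw [phi_even h2]
        rw [het']
        have h'' : t ∘ t = t := by rw [← het']; exact hee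
        rw [h'']
      · rw [phi_sing (not_bij_of_not_perm h1 h2)]

theorem closure (hn : 5 ≤ n) {α β : (Fin n → Fin n) → (Fin n → Fin n)}
    (hα : IsEndo α) (hβ : IsEndo β)
    (hra : ∃ γ, IsEndo γ ∧ (fun x => α (γ (α x))) = α)
    (hrb : ∃ δ, IsEndo δ ∧ (fun x => β (δ (β x))) = β) :
    ∃ ρ, IsEndo ρ ∧
      (fun x => β (α (ρ (β (α x))))) = fun x => β (α x) := by
  have hn2 : 2 ≤ n := by omega
  have hγendo : IsEndo (fun x => β (α x)) := by
    intro s s'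
    simp only
    rw [hα, hβ]
  have hmain : Function.Bijective (fun x => β (α x)) ∨
      ((fun x => β (α (β (α x)))) = fun x => β (α x)) := by
    have ha : Function.Bijective α ∨ (fun x => α (α x)) = α := by
      by_cases hba : Function.Bijective α
      · exact Or.inl hba
      · exact Or.inr (idem_of_regular hn hα hba hra)
    have hb : Function.Bijective β ∨ (fun x => β (β x)) = β := by
      by_cases hbb : Function.Bijective β
      · exact Or.inl hbb
      · exact Or.inr (idem_of_regular hn hβ hbb hrb)
    rcases ha with habij | haidem
    · rcases hb with hbbij | hbidem
      · exact Or.inl (hbbij.comp habij)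
      · by_cases hbb : Function.Bijective β
        · have hβid : ∀ y, β y = y := fun y => hbb.1 (congrFun hbidem y)
          refine Or.inl ?_
          have h1 : (fun x => β (α x)) = α := funext fun x => hβid (α x)
          rw [h1]
          exact habij
        · obtain ⟨t', e', hperm', hphi'⟩ := classification hn hβ hbb
          have hγβ : (fun x : Fin n → Fin n => β (α x)) = β := by
            funext x
            show β (α x) = β x
            rw [hphi']
            by_cases h1 : IsOddPerm x
            · rw [phi_odd (odd_pres hn2 hα habij h1), phi_odd h1]
            · by_cases h2 : IsEvenPerm x
              · rw [phi_even (even_pres hn2 hα habij h2), phi_even h2]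
              · have h3 : ¬ Function.Bijective x := not_bij_of_not_perm h1 h2
                have h4 : ¬ Function.Bijective (α x) :=
                  fun hbx => h3 (bij_pres' hα habij hbx)
                rw [phi_sing h4, phi_sing h3]
          refine Or.inr ?_
          funext x
          have k : ∀ y, β (α y) = β y := fun y => congrFun hγβ y
          show β (α (β (α x))) = β (α x)
          rw [k (β (α x)), k x]
          exact congrFun hbidem x
    · by_cases hba : Function.Bijective α
      · have hαid : ∀ y, α y = y := fun y => hba.1 (congrFun haidem y)
        rcases hb with hbbij | hbidem
        · refine Or.inl ?_
          have h1 : (fun x => β (α x)) = β := funext fun x => by rw [hαid x]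
          rw [h1]
          exact hbbij
        · refine Or.inr ?_
          funext x
          show β (α (β (α x))) = β (α x)
          rw [hαid x, hαid (β x)]
          exact congrFun hbidem x
      · -- α non-bijective idempotent
        by_cases hbb : Function.Bijective β
        · -- β bijective
          obtain ⟨t, e, hperm, hphi⟩ := classification hn hα hba
          have key : ∀ y, α (β y) = α y := by
            intro y
            rw [hphi]
            by_cases h1 : IsOddPerm y
            · rw [phi_odd (odd_pres hn2 hβ hbb h1), phi_odd h1]
            · by_cases h2 : IsEvenPerm y
              · rw [phi_even (even_pres hn2 hβ hbb h2), phi_even h2]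
              · have h3 : ¬ Function.Bijective y := not_bij_of_not_perm h1 h2
                have h4 : ¬ Function.Bijective (β y) :=
                  fun hby => h3 (bij_pres' hβ hbb hby)
                rw [phi_sing h4, phi_sing h3]
          refine Or.inr ?_
          funext x
          show β (α (β (α x))) = β (α x)
          rw [key (α x), congrFun haidem x]
        · -- both non-bijective idempotent : profile analysis
          have hbidem : (fun x => β (β x)) = β := by
            rcases hb with hbbij | hbidem
            · exact absurd hbbij hbb
            · exact hbidem
          refine Or.inr ?_
          rcases idem_profile hn hβ hbb hbidem with hB | hB | hB | hB
          · obtain ⟨e', he'nb, hB_bij, hB_sing⟩ := hB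
            rcases idem_profile hn hα hba haidem with hA | hA | hA | hA
            · obtain ⟨e, henb, hA_bij, hA_sing⟩ := hA
              funext x
              show β (α (β (α x))) = β (α x)
              by_cases hbx : Function.Bijective x
              · rw [hA_bij x hbx, hB_bij id Function.bijective_id,
                  hA_bij id Function.bijective_id, hB_bij id Function.bijective_id]
              · rw [hA_sing x hbx, hB_sing e henb, hA_sing e' he'nb, hB_sing e henb]
            · obtain ⟨e, henb, hA⟩ := hA
              funext x
              show β (α (β (α x))) = β (α x)
              rw [hA (β (α x)), hA x]
            · obtain ⟨t, e, henb, htodd, hA_odd, hA_even, hA_sing⟩ := hA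
              funext x
              show β (α (β (α x))) = β (α x)
              by_cases h1 : IsOddPerm x
              · rw [hA_odd x h1, hB_bij t (odd_bij htodd),
                  hA_even id isEvenPerm_id, hB_bij id Function.bijective_id]
              · by_cases h2 : IsEvenPerm x
                · rw [hA_even x h2, hB_bij id Function.bijective_id,
                    hA_even id isEvenPerm_id, hB_bij id Function.bijective_id]
                · rw [hA_sing x (not_bij_of_not_perm h1 h2), hB_sing e henb,
                    hA_sing e' he'nb, hB_sing e henb]
            · funext x
              show β (α (β (α x))) = β (α x)
              rw [hA (β (α x)), hA x]
          · obtain ⟨e', he'nb, hB⟩ := hB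
            funext x
            show β (α (β (α x))) = β (α x)
            rw [hB (α (β (α x))), hB (α x)]
          · obtain ⟨t', e', he'nb, ht'odd, hB_odd, hB_even, hB_sing⟩ := hB
            rcases idem_profile hn hα hba haidem with hA | hA | hA | hA
            · obtain ⟨e, henb, hA_bij, hA_sing⟩ := hA
              funext x
              show β (α (β (α x))) = β (α x)
              by_cases hbx : Function.Bijective x
              · rw [hA_bij x hbx, hB_even id isEvenPerm_id,
                  hA_bij id Function.bijective_id, hB_even id isEvenPerm_id]
              · rw [hA_sing x hbx, hB_sing e henb, hA_sing e' he'nb, hB_sing e henb]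
            · obtain ⟨e, henb, hA⟩ := hA
              funext x
              show β (α (β (α x))) = β (α x)
              rw [hA (β (α x)), hA x]
            · obtain ⟨t, e, henb, htodd, hA_odd, hA_even, hA_sing⟩ := hA
              funext x
              show β (α (β (α x))) = β (α x)
              by_cases h1 : IsOddPerm x
              · rw [hA_odd x h1, hB_odd t htodd, hA_odd t' ht'odd, hB_odd t htodd]
              · by_cases h2 : IsEvenPerm x
                · rw [hA_even x h2, hB_even id isEvenPerm_id,
                    hA_even id isEvenPerm_id, hB_even id isEvenPerm_id]
                · rw [hA_sing x (not_bij_of_not_perm h1 h2), hB_sing e henb,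
                    hA_sing e' he'nb, hB_sing e henb]
            · funext x
              show β (α (β (α x))) = β (α x)
              rw [hA (β (α x)), hA x]
          · funext x
            show β (α (β (α x))) = β (α x)
            rw [hB (α (β (α x))), hB (α x)]
  obtain ⟨ρ, hρendo, hρeq⟩ := regular_of hγendo hmain
  exact ⟨ρ, hρendo, hρeq⟩


theorem exists_nonregular (hn : 5 ≤ n) :
    ∃ α : (Fin n → Fin n) → (Fin n → Fin n), IsEndo α ∧
      ¬ ∃ β, IsEndo β ∧ (fun x => α (β (α x))) = α := by
  have h0n : 0 < n := by omega
  have h1n : 1 < n := by omega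
  have h2n : 2 < n := by omega
  have h3n : 3 < n := by omega
  set z0 : Fin n := ⟨0, h0n⟩ with hz0
  set z1 : Fin n := ⟨1, h1n⟩ with hz1
  set z2 : Fin n := ⟨2, h2n⟩ with hz2
  set z3 : Fin n := ⟨3, h3n⟩ with hz3
  have hz01 : z0 ≠ z1 := by simp [hz0, hz1, Fin.ext_iff]
  have hz02 : z0 ≠ z2 := by simp [hz0, hz2, Fin.ext_iff]
  have hz12 : z1 ≠ z2 := by simp [hz1, hz2, Fin.ext_iff]
  have hz30 : z3 ≠ z0 := by simp [hz3, hz0, Fin.ext_iff]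
  have hz31 : z3 ≠ z1 := by simp [hz3, hz1, Fin.ext_iff]
  have hz32 : z3 ≠ z2 := by simp [hz3, hz2, Fin.ext_iff]
  set t : Fin n → Fin n := fun x => if x = z0 then z1 else if x = z1 then z0 else z2
    with htdef
  set e : Fin n → Fin n := fun _ => z2 with hedef
  have htz0 : t z0 = z1 := by rw [htdef]; simp
  have htz1 : t z1 = z0 := by rw [htdef]; simp [Ne.symm hz01]
  have htz2 : t z2 = z2 := by rw [htdef]; simp [Ne.symm hz02, Ne.symm hz12]
  have htz3 : t z3 = z2 := by rw [htdef]; simp [hz30, hz31]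
  have ht3 : t ∘ t ∘ t = t := by
    funext x
    show t (t (t x)) = t x
    by_cases hx0 : x = z0
    · rw [hx0, htz0, htz1, htz0]
    · by_cases hx1 : x = z1
      · rw [hx1, htz1, htz0, htz1]
      · have hx : t x = z2 := by rw [htdef]; simp [hx0, hx1]
        rw [hx, htz2, htz2]
  have hte : t ∘ e = e := by
    funext x
    show t (e x) = e x
    show t z2 = z2
    exact htz2
  have het : e ∘ t = e := rfl
  have hee : e ∘ e = e := rfl
  have hperm : Permissible t e := ⟨ht3, hte, het, hee⟩
  have htnb : ¬ Function.Bijective t := by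
    intro hb
    have h1 : t z2 = t z3 := by rw [htz2, htz3]
    exact hz32 (hb.1 h1).symm
  refine ⟨phi t e, endo_phi hperm, ?_⟩
  rintro ⟨β, hβ, heq⟩
  have hR : ∀ s, phi t e (β (phi t e s)) = phi t e s := fun s => congrFun heq s
  have hoddrep : IsOddPerm ⇑(Equiv.swap z0 z1) :=
    ⟨Equiv.swap z0 z1, Equiv.Perm.sign_swap hz01, rfl⟩
  have cond_t : phi t e (β t) = t := by
    have h0 := hR ⇑(Equiv.swap z0 z1)
    rwa [phi_odd hoddrep] at h0
  have hte' : t ≠ e := by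
    intro h0
    have h1 : t z0 = e z0 := congrFun h0 z0
    rw [htz0] at h1
    exact hz12 h1
  by_cases hbβ : Function.Bijective β
  · have h2 : ¬ Function.Bijective (β t) := fun hb => htnb (bij_pres' hβ hbβ hb)
    rw [phi_sing h2] at cond_t
    exact hte' cond_t.symm
  · obtain ⟨t', e', hperm', hphi'⟩ := classification hn hβ hbβ
    have hβt : β t = e' := by rw [hphi', phi_sing htnb]
    rw [hβt] at cond_t
    by_cases hbe' : Function.Bijective e'
    · have he'id : e' = id := idem_bij_eq_id hperm'.2.2.2 hbe'
      rw [he'id, phi_even isEvenPerm_id] at cond_t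
      have h1 : t (t z0) = t z0 := congrFun cond_t z0
      rw [htz0, htz1] at h1
      exact hz01 h1
    · rw [phi_sing hbe'] at cond_t
      exact hte' cond_t.symm

end Reg

/-- For `n ≥ 5`: a semigroup endomorphism `α` of `T_n` is regular iff `α` is
bijective or idempotent; the regular elements are closed under products; and there exists a
non-regular semigroup endomorphism. -/
theorem regular_elements (n : ℕ) (hn : 5 ≤ n) :
    (∀ α : (Fin n → Fin n) → (Fin n → Fin n), IsEndo α →
      ((∃ β, IsEndo β ∧ (fun x => α (β (α x))) = α) ↔
        (Function.Bijective α ∨ (fun x => α (α x)) = α))) ∧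
      (∀ α β : (Fin n → Fin n) → (Fin n → Fin n), IsEndo α → IsEndo β →
        (∃ γ, IsEndo γ ∧ (fun x => α (γ (α x))) = α) →
        (∃ δ, IsEndo δ ∧ (fun x => β (δ (β x))) = β) →
        ∃ ρ, IsEndo ρ ∧
          (fun x => β (α (ρ (β (α x))))) = fun x => β (α x)) ∧
      (∃ α : (Fin n → Fin n) → (Fin n → Fin n), IsEndo α ∧
        ¬ ∃ β, IsEndo β ∧ (fun x => α (β (α x))) = α) := by
  refine ⟨?_, ?_, ?_⟩
  · intro α hα
    constructor
    · intro hreg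
      by_cases hb : Function.Bijective α
      · exact Or.inl hb
      · exact Or.inr (Reg.idem_of_regular hn hα hb hreg)
    · exact Reg.regular_of hα
  · intro α β hα hβ hra hrb
    exact Reg.closure hn hα hβ hra hrb
  · exact Reg.exists_nonregular hn
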